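/- With the setup above (0 < a_k < 1, |d_k| < 1, at least two d_k ≠ 0, and β(q) defined by ∑_{k: d_k≠0} |d_k|^q a_k^{β(q)} = 1), the function q ↦ β(q) is strictly decreasing and convex on ℝ. -/
import Mathlib


open Real Finset

theorem stmt_3 (r : ℕ) (a d : Fin r → ℝ)
    (ha : ∀ k, 0 < a k ∧ a k < 1) (hd : ∀ k, |d k| < 1)
    (h2 : 2 ≤ (univ.filter fun k => d k ≠ 0).card)
    (β : ℝ → ℝ)
    (hβ : ∀ q : ℝ, ∑ k ∈ univ.filter (fun k => d k ≠ 0), |d k| ^ q * a k ^ β q = 1) :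
    StrictAnti β ∧ ConvexOn ℝ Set.univ β := by
  set S := univ.filter (fun k => d k ≠ 0) with hS
  have hSne : S.Nonempty := card_pos.mp (lt_of_lt_of_le (by norm_num) h2)
  have hdk : ∀ k ∈ S, 0 < |d k| := by
    intro k hk
    rw [hS, mem_filter] at hk
    exact abs_pos.mpr hk.2
  -- monotonicity in the second argument gives the "inversion" lemma
  have key : ∀ q b, (∑ k ∈ S, |d k| ^ q * a k ^ b) ≤ 1 → β q ≤ b := by
    intro q b h
    by_contra hc
    push_neg at hc
    have hlt : (1:ℝ) < ∑ k ∈ S, |d k| ^ q * a k ^ b := by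
      rw [← hβ q]
      refine Finset.sum_lt_sum_of_nonempty hSne ?_
      intro k hk
      exact mul_lt_mul_of_pos_left
        (Real.rpow_lt_rpow_of_exponent_gt (ha k).1 (ha k).2 hc)
        (Real.rpow_pos_of_pos (hdk k hk) q)
    linarith
  constructor
  · intro q1 q2 hq
    by_contra hc
    push_neg at hc
    have h1 : (1:ℝ) = ∑ k ∈ S, |d k| ^ q2 * a k ^ β q2 := (hβ q2).symm
    have h2' : (∑ k ∈ S, |d k| ^ q2 * a k ^ β q2)
        ≤ ∑ k ∈ S, |d k| ^ q2 * a k ^ β q1 := by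
      refine Finset.sum_le_sum ?_
      intro k hk
      exact mul_le_mul_of_nonneg_left
        (Real.rpow_le_rpow_of_exponent_ge (ha k).1 (le_of_lt (ha k).2) hc)
        (Real.rpow_nonneg (abs_nonneg _) _)
    have h3 : (∑ k ∈ S, |d k| ^ q2 * a k ^ β q1)
        < ∑ k ∈ S, |d k| ^ q1 * a k ^ β q1 := by
      refine Finset.sum_lt_sum_of_nonempty hSne ?_
      intro k hk
      exact mul_lt_mul_of_pos_right
        (Real.rpow_lt_rpow_of_exponent_gt (hdk k hk) (hd k) hq)
        (Real.rpow_pos_of_pos (ha k).1 _)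
    rw [hβ q1] at h3
    linarith
  · refine ⟨convex_univ, ?_⟩
    intro x _ y _ t s ht hs hts
    simp only [smul_eq_mul]
    refine key _ _ ?_
    have hsum : ∑ k ∈ S, |d k| ^ (t * x + s * y) * a k ^ (t * β x + s * β y)
        ≤ ∑ k ∈ S, (t * (|d k| ^ x * a k ^ β x) + s * (|d k| ^ y * a k ^ β y)) := by
      refine Finset.sum_le_sum ?_
      intro k hk
      have hdp := hdk k hk
      have hap := (ha k).1
      have e1 : |d k| ^ (t * x + s * y) * a k ^ (t * β x + s * β y)
          = Real.exp (t * (x * Real.log |d k| + β x * Real.log (a k))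
              + s * (y * Real.log |d k| + β y * Real.log (a k))) := by
        rw [Real.rpow_def_of_pos hdp, Real.rpow_def_of_pos hap, ← Real.exp_add]
        ring_nf
      have e2 : |d k| ^ x * a k ^ β x
          = Real.exp (x * Real.log |d k| + β x * Real.log (a k)) := by
        rw [Real.rpow_def_of_pos hdp, Real.rpow_def_of_pos hap, ← Real.exp_add]
        ring_nf
      have e3 : |d k| ^ y * a k ^ β y
          = Real.exp (y * Real.log |d k| + β y * Real.log (a k)) := by
        rw [Real.rpow_def_of_pos hdp, Real.rpow_def_of_pos hap, ← Real.exp_add]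
        ring_nf
      rw [e1, e2, e3]
      have hcv := convexOn_exp.2 (Set.mem_univ (x * Real.log |d k| + β x * Real.log (a k)))
        (Set.mem_univ (y * Real.log |d k| + β y * Real.log (a k))) ht hs hts
      simpa using hcv
    rw [Finset.sum_add_distrib, ← Finset.mul_sum, ← Finset.mul_sum, hβ x, hβ y] at hsum
    linarith
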